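/- Let q = p^e with p prime, 0 ≤ k < e, and let R = F_q^N be the product ring with componentwise operations. For an R-submodule C ⊆ R^n and each index S ∈ {1,…,N}, let π_S : R^n → F_q^n take the S-th component in every coordinate and C_S = π_S(C). Then π_S(C ∩ C^{⊥k,R}) = C_S ∩ (C_S)^{⊥k}; that is, the projection of the k-Galois hull of C equals the k-Galois hull of the projection C_S. -/
import Mathlib


/-- The `k`-Galois dual (as a set) of a set of codewords `C ⊆ R^ι`,
with respect to the inner product `⟨u,v⟩ = ∑ i, u i * (v i)^pk`. -/
def galoisDualSet {R : Type*} [CommRing R] {ι : Type*} [Fintype ι]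
    (pk : ℕ) (C : Set (ι → R)) : Set (ι → R) :=
  {v | ∀ c ∈ C, ∑ i, c i * v i ^ pk = 0}

theorem stmt9 {p e k N n : ℕ} (hp : p.Prime) (he : 0 < e) (hk : k < e)
    {F : Type*} [Field F] [Fintype F] (hcard : Fintype.card F = p ^ e)
    (C : Submodule (Fin N → F) (Fin n → Fin N → F)) (S : Fin N) :
    (fun ρ : Fin n → Fin N → F => fun i => ρ i S) ''
        ((C : Set (Fin n → Fin N → F)) ∩
          galoisDualSet (p ^ k) (C : Set (Fin n → Fin N → F))) =
      ((fun ρ : Fin n → Fin N → F => fun i => ρ i S) ''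
          (C : Set (Fin n → Fin N → F))) ∩
        galoisDualSet (p ^ k)
          ((fun ρ : Fin n → Fin N → F => fun i => ρ i S) ''
            (C : Set (Fin n → Fin N → F))) := by
  have hpk : p ^ k ≠ 0 := pow_ne_zero _ hp.ne_zero
  ext v
  constructor
  · rintro ⟨ρ, ⟨hρC, hρD⟩, rfl⟩
    refine ⟨⟨ρ, hρC, rfl⟩, ?_⟩
    rintro c ⟨x, hxC, rfl⟩
    have h := congrFun (hρD x hxC) S
    simpa [Finset.sum_apply] using h
  · rintro ⟨⟨x, hxC, rfl⟩, hv⟩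
    refine ⟨(Pi.single S (1:F)) • x, ⟨C.smul_mem _ hxC, ?_⟩, ?_⟩
    · intro c hcC
      funext T
      have h := hv (fun i => c i S) ⟨c, hcC, rfl⟩
      by_cases hT : T = S
      · subst hT
        simpa [Finset.sum_apply, Pi.smul_apply, smul_eq_mul] using h
      · simp [Finset.sum_apply, Pi.smul_apply, smul_eq_mul,
          Pi.single_eq_of_ne hT, zero_pow hpk]
    · funext i
      simp
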